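/- Let f be a continuous self-map of a compact metric space X with finitely many non-wandering points, and let Y ⊆ X be an f-invariant set containing exactly one non-wandering point. Then the polynomial entropy h_pol(f;Y) is bounded from above by the maximal cardinality of a singular set contained in the closure of Y. -/

import Mathlib

open Filter Topology TopologicalSpace Set
open scoped ENNReal

/-- The dynamic distance `d_n^f(x,y) = max_{0 ≤ k ≤ n-1} d(f^k x, f^k y)`. -/
noncomputable def dynDist {X : Type*} [MetricSpace X] (f : X → X) (n : ℕ) (x y : X) : ℝ :=
  ((Finset.range n).sup fun k => nndist (f^[k] x) (f^[k] y) : NNReal)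

/-- A finite set `E` is `(n,ε)`-separated for `f`. -/
def IsDynSeparated {X : Type*} [MetricSpace X] (f : X → X) (n : ℕ) (ε : ℝ) (E : Finset X) :
    Prop :=
  ∀ x ∈ E, ∀ y ∈ E, x ≠ y → ε ≤ dynDist f n x y

/-- `S(n,ε;Y)`: the maximal cardinality of an `(n,ε)`-separated subset of `Y`. -/
noncomputable def maxSep {X : Type*} [MetricSpace X] (f : X → X) (Y : Set X) (n : ℕ) (ε : ℝ) :
    ℕ :=
  sSup {m : ℕ | ∃ E : Finset X, ↑E ⊆ Y ∧ E.card = m ∧ IsDynSeparated f n ε E}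

/-- The polynomial entropy `h_pol(f;Y)`.  Since `ε ↦ S(n,ε;Y)` is nonincreasing, the limit as
`ε → 0` of the `limsup` coincides with the supremum over `ε > 0`. -/
noncomputable def polEnt {X : Type*} [MetricSpace X] (f : X → X) (Y : Set X) : ℝ≥0∞ :=
  ⨆ (ε : ℝ) (_ : 0 < ε),
    Filter.atTop.limsup fun n : ℕ =>
      ENNReal.ofReal (Real.log (maxSep f Y n ε) / Real.log n)

/-- The set of non-wandering points of `f`. -/
def nonWandering {X : Type*} [TopologicalSpace X] (f : X → X) : Set X :=
  {p | ∀ U ∈ nhds p, ∃ n : ℕ, 1 ≤ n ∧ (f^[n] '' U ∩ U).Nonempty}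

/-- The induced map `2^f` on the hyperspace of nonempty closed (= compact) subsets of a
compact metric space. -/
noncomputable def induced2 {X : Type*} [TopologicalSpace X] (f : X → X) (hf : Continuous f) :
    NonemptyCompacts X → NonemptyCompacts X :=
  fun A => ⟨⟨f '' A, A.isCompact.image hf⟩, A.nonempty.image f⟩

/-- The hyperspace `C(X)` of subcontinua (nonempty closed connected subsets) of `X`. -/
abbrev Subcontinua (X : Type*) [TopologicalSpace X] :=
  {A : NonemptyCompacts X // IsConnected (A : Set X)}

/-- The induced map `C(f)` on the hyperspace of subcontinua. -/
noncomputable def inducedC {X : Type*} [TopologicalSpace X] (f : X → X) (hf : Continuous f) :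
    Subcontinua X → Subcontinua X :=
  fun A => ⟨induced2 f hf A.1, A.2.image f hf.continuousOn⟩

/-- The `k`-fold symmetric product `X^{*k}`: nonempty subsets of `X` with at most `k` points. -/
abbrev SymProd (X : Type*) [TopologicalSpace X] (k : ℕ) :=
  {A : NonemptyCompacts X // (A : Set X).Finite ∧ (A : Set X).ncard ≤ k}

/-- The induced map `f^{*k}` on the `k`-fold symmetric product. -/
noncomputable def inducedSym {X : Type*} [TopologicalSpace X] (f : X → X) (hf : Continuous f)
    (k : ℕ) : SymProd X k → SymProd X k :=
  fun A => ⟨induced2 f hf A.1, A.2.1.image f, le_trans (Set.ncard_image_le A.2.1) A.2.2⟩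

/-- Sets `U 0, …, U (L-1)` are mutually singular for `f`. -/
def MutuallySingularSets {X : Type*} [TopologicalSpace X] (f : X → X) {L : ℕ}
    (U : Fin L → Set X) : Prop :=
  ∀ M : ℕ, ∃ x : X, ∃ n : Fin L → ℕ, (∀ j, 1 ≤ n j ∧ f^[n j] x ∈ U j) ∧
    ∀ i j, i ≠ j → (M : ℤ) < |(n i : ℤ) - (n j : ℤ)|

/-- A finite set `S ⊆ X \ NW(f)` is singular: it consists of mutually singular points, i.e.
every family of respective neighbourhoods of its points is mutually singular. -/
def IsSingularSet {X : Type*} [TopologicalSpace X] (f : X → X) (S : Set X) : Prop :=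
  S.Finite ∧ (∀ x ∈ S, x ∉ nonWandering f) ∧
  ∀ (L : ℕ) (x : Fin L → X), Function.Injective x → Set.range x = S →
    ∀ U : Fin L → Set X, (∀ j, U j ∈ nhds (x j)) → MutuallySingularSets f U

/-- The set of codings of length-`n` orbit segments of points of `Y` relative to the family
`F`, where the letter `none` stands for `Y_∞ = Y \ ⋃ F`. -/
def codings {X : Type*} (f : X → X) {L : ℕ} (F : Fin L → Set X) (Y : Set X) (n : ℕ) :
    Set (Fin n → Option (Fin L)) :=
  {w | ∃ x ∈ Y, ∀ j : Fin n, match w j with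
    | some i => f^[(j : ℕ)] x ∈ F i
    | none => f^[(j : ℕ)] x ∈ Y \ ⋃ i, F i}

/-- The polynomial entropy of `f` on `Y` relative to the family `F`:
`limsup_n log #A_n(F;Y) / log n`. -/
noncomputable def polEntRel {X : Type*} (f : X → X) {L : ℕ} (F : Fin L → Set X) (Y : Set X) :
    ℝ≥0∞ :=
  Filter.atTop.limsup fun n : ℕ =>
    ENNReal.ofReal (Real.log ((codings f F Y n).ncard) / Real.log n)

/-- The circle is connected. -/
theorem circle_isConnected_univ : IsConnected (Set.univ : Set Circle) := by
  have hsurj : Function.Surjective Circle.exp := fun z => ⟨Complex.arg z, Circle.exp_arg z⟩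
  have : ConnectedSpace Circle :=
    { toPreconnectedSpace := ⟨by
        rw [← Set.image_univ_of_surjective hsurj]
        exact isPreconnected_univ.image _ Circle.exp.continuous.continuousOn⟩,
      toNonempty := ⟨1⟩ }
  exact isConnected_univ


namespace Stmt10Aux
set_option linter.unusedSectionVars false
set_option linter.unusedVariables false


set_option linter.unusedSectionVars false

lemma no_return {X : Type*} {f : X → X} {U : Set X}
    (hU : ∀ d : ℕ, 1 ≤ d → (f^[d] '' U ∩ U) = ∅)
    {x : X} {t t' : ℕ} (h : t < t') (h1 : f^[t] x ∈ U) (h2 : f^[t'] x ∈ U) : False := by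
  have hd : f^[t'] x = f^[t' - t] (f^[t] x) := by
    rw [← Function.iterate_add_apply]; congr 1; omega
  have hm : f^[t' - t] (f^[t] x) ∈ f^[t' - t] '' U ∩ U :=
    ⟨Set.mem_image_of_mem _ h1, hd ▸ h2⟩
  rw [hU (t' - t) (by omega)] at hm
  exact hm

/-- All the data needed for the coding/counting argument. -/
structure Ctx (X : Type*) [MetricSpace X] (J : Type*) [Fintype J] where
  f : X → X
  Y : Set X
  W : J → Set X
  PF : Finset X
  δ : ℝ
  ε : ℝ
  M₀ : ℕ
  L : ℕ
  n : ℕ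
  hY : Set.MapsTo f Y Y
  hε : 0 < ε
  hcov : ∀ z ∈ Y, ¬ (∃ p, p ∈ PF ∧ z ∈ Metric.ball p δ) → ∃ j, z ∈ W j
  hWsmall : ∀ j, ∀ a ∈ W j, ∀ b ∈ W j, dist a b < ε
  hWonce : ∀ j, ∀ d, 1 ≤ d → (f^[d] '' W j ∩ W j) = ∅
  h2δ : 2 * δ ≤ ε
  hdisj : ∀ p ∈ PF, ∀ p' ∈ PF, ∀ z, z ∈ Metric.ball p δ → z ∈ Metric.ball p' δ → p = p'
  hdet : ∀ p ∈ PF, ∀ z ∈ Metric.ball p δ, (∃ p', p' ∈ PF ∧ f z ∈ Metric.ball p' δ) →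
    f z ∈ Metric.ball (f p) δ
  hfPF : ∀ p ∈ PF, f p ∈ PF
  hM₀ : ∀ x ∈ Y, ∀ t : Fin (L + 1) → ℕ,
    (∀ i, 1 ≤ t i ∧ ¬ (∃ p, p ∈ PF ∧ f^[t i] x ∈ Metric.ball p δ)) →
    ∃ i j, i ≠ j ∧ |(t i : ℤ) - (t j : ℤ)| ≤ (M₀ : ℤ)

namespace Ctx

attribute [local instance] Classical.propDecidable

variable {X : Type*} [MetricSpace X] {J : Type*} [Fintype J] (C : Ctx X J)

/-- membership in the union of the balls around non-wandering points -/
def InB (z : X) : Prop := ∃ p, p ∈ C.PF ∧ z ∈ Metric.ball p C.δ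

noncomputable def bl (z : X) : Option {p : X // p ∈ C.PF} :=
  if h : C.InB z then some ⟨h.choose, h.choose_spec.1⟩ else none

lemma bl_eq_none {z : X} : C.bl z = none ↔ ¬ C.InB z := by
  by_cases h : C.InB z <;> simp [bl, h]

lemma bl_eq_some_of {z p} (hp : p ∈ C.PF) (hz : z ∈ Metric.ball p C.δ) :
    C.bl z = some ⟨p, hp⟩ := by
  have h : C.InB z := ⟨p, hp, hz⟩
  rw [bl, dif_pos h]
  have hs := h.choose_spec
  have hpp : h.choose = p := C.hdisj _ hs.1 _ hp _ hs.2 hz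
  simp only [Option.some_inj]
  exact Subtype.ext hpp

lemma bl_spec {z : X} {p} (h : C.bl z = some p) : z ∈ Metric.ball (p : X) C.δ := by
  by_cases h' : C.InB z
  · rw [bl, dif_pos h'] at h
    have hcs := h'.choose_spec
    have hpe := Option.some_inj.1 h
    rw [← hpe]
    exact hcs.2
  · rw [bl, dif_neg h'] at h; exact absurd h (by simp)

noncomputable def wjf (z : X) : Option J :=
  if h : ∃ j, z ∈ C.W j then some h.choose else none

lemma wjf_spec {z : X} {j} (h : C.wjf z = some j) : z ∈ C.W j := by
  by_cases h' : ∃ j, z ∈ C.W j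
  · rw [wjf, dif_pos h'] at h
    rw [Option.some_inj] at h
    rw [← h]; exact h'.choose_spec
  · rw [wjf, dif_neg h'] at h; exact absurd h (by simp)

lemma wjf_some {z : X} (h : ∃ j, z ∈ C.W j) : ∃ j, C.wjf z = some j := by
  rw [wjf, dif_pos h]; exact ⟨h.choose, rfl⟩

/-- the orbit letter is a `W`-cover letter at a positive time -/
noncomputable def T (x : X) : Finset ℕ :=
  (Finset.range C.n).filter fun t => 1 ≤ t ∧ ¬ C.InB (C.f^[t] x)

lemma mem_T {x : X} {t : ℕ} : t ∈ C.T x ↔ t < C.n ∧ 1 ≤ t ∧ ¬ C.InB (C.f^[t] x) := by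
  simp [T, and_assoc]

lemma wjf_some_of_T {x : X} {t : ℕ} (hx : x ∈ C.Y) (ht : t ∈ C.T x) :
    ∃ j, C.wjf (C.f^[t] x) = some j := by
  apply C.wjf_some
  exact C.hcov _ ((C.hY.iterate t) hx) (C.mem_T.1 ht).2.2

lemma T_letter_unique {x : X} {t t' : ℕ} {j : J}
    (h1 : C.f^[t] x ∈ C.W j) (h2 : C.f^[t'] x ∈ C.W j) : t = t' := by
  by_contra hne
  rcases lt_trichotomy t t' with h | h | h
  · exact no_return (C.hWonce j) h h1 h2
  · exact hne h
  · exact no_return (C.hWonce j) h h2 h1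

lemma card_T_le {x : X} (hx : x ∈ C.Y) : (C.T x).card ≤ Fintype.card J := by
  have h1 : (C.T x).card ≤ ((Finset.univ : Finset J).image some).card := by
    apply Finset.card_le_card_of_injOn (fun t => C.wjf (C.f^[t] x))
    · intro t ht
      obtain ⟨j, hj⟩ := C.wjf_some_of_T hx ht
      show C.wjf (C.f^[t] x) ∈ _
      rw [hj]
      exact Finset.mem_image_of_mem some (Finset.mem_univ j)
    · intro t ht t' ht' heq
      have heq' : C.wjf (C.f^[t] x) = C.wjf (C.f^[t'] x) := heq
      obtain ⟨j, hj⟩ := C.wjf_some_of_T hx ht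
      have hj' : C.wjf (C.f^[t'] x) = some j := by rw [← heq', hj]
      exact C.T_letter_unique (C.wjf_spec hj) (C.wjf_spec hj')
  calc (C.T x).card ≤ _ := h1
    _ ≤ (Finset.univ : Finset J).card := Finset.card_image_le
    _ = Fintype.card J := Finset.card_univ

/-- starts of clusters of `T`-times -/
noncomputable def St (x : X) : Finset ℕ :=
  (C.T x).filter fun t => ∀ s ∈ C.T x, s < t → C.M₀ + s < t

lemma St_subset {x : X} : C.St x ⊆ C.T x := Finset.filter_subset _ _

lemma St_gap {x : X} {a a' : ℕ} (ha : a ∈ C.St x) (ha' : a' ∈ C.St x) (h : a < a') :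
    C.M₀ + a < a' :=
  (Finset.mem_filter.1 ha').2 a (C.St_subset ha) h

lemma exists_start_le {x : X} : ∀ t ∈ C.T x, ∃ a ∈ C.St x, a ≤ t := by
  intro t
  induction t using Nat.strong_induction_on with
  | _ t ih =>
    intro ht
    by_cases hs : ∀ s ∈ C.T x, s < t → C.M₀ + s < t
    · exact ⟨t, Finset.mem_filter.2 ⟨ht, hs⟩, le_refl t⟩
    · push_neg at hs
      obtain ⟨s, hsT, hst, hns⟩ := hs
      obtain ⟨a, ha, hat⟩ := ih s hst hsT
      exact ⟨a, ha, le_trans hat (le_of_lt hst)⟩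

lemma card_St_le {x : X} (hx : x ∈ C.Y) : (C.St x).card ≤ C.L := by
  by_contra h
  push_neg at h
  have hof : C.L + 1 ≤ (C.St x).card := h
  set em := (C.St x).orderEmbOfCardLe hof with hem
  have hmem : ∀ i, em i ∈ C.St x := fun i => Finset.orderEmbOfCardLe_mem _ hof i
  have hcond : ∀ i, 1 ≤ em i ∧ ¬ (∃ p, p ∈ C.PF ∧ C.f^[em i] x ∈ Metric.ball p C.δ) := by
    intro i
    have hT := C.mem_T.1 (C.St_subset (hmem i))
    exact ⟨hT.2.1, hT.2.2⟩
  obtain ⟨i, j, hij, habs⟩ := C.hM₀ x hx (fun i => em i) hcond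
  rw [abs_le] at habs
  have hne : em i ≠ em j := fun h' => hij (em.injective h')
  rcases lt_trichotomy (em i) (em j) with h' | h' | h'
  · have := C.St_gap (hmem i) (hmem j) h'; omega
  · exact hne h'
  · have := C.St_gap (hmem j) (hmem i) h'; omega

noncomputable def anchor (x : X) (t : ℕ) : ℕ := ((C.St x).filter (· ≤ t)).sup id

lemma anchor_mem_le {x : X} {t : ℕ} (ht : t ∈ C.T x) :
    C.anchor x t ∈ C.St x ∧ C.anchor x t ≤ t := by
  obtain ⟨a, ha, hat⟩ := C.exists_start_le t ht
  have hne : ((C.St x).filter (· ≤ t)).Nonempty := ⟨a, Finset.mem_filter.2 ⟨ha, hat⟩⟩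
  obtain ⟨b, hb, hsup⟩ := Finset.exists_mem_eq_sup _ hne id
  rw [anchor, hsup]
  exact ⟨(Finset.mem_filter.1 hb).1, (Finset.mem_filter.1 hb).2⟩

lemma le_anchor {x : X} {t a : ℕ} (ha : a ∈ C.St x) (hat : a ≤ t) : a ≤ C.anchor x t :=
  Finset.le_sup (f := id) (Finset.mem_filter.2 ⟨ha, hat⟩)

lemma anchor_gap {x : X} : ∀ t ∈ C.T x,
    t - C.anchor x t ≤ C.M₀ * ((C.T x).filter (· < t)).card := by
  intro t
  induction t using Nat.strong_induction_on with
  | _ t ih =>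
    intro ht
    by_cases hs : t ∈ C.St x
    · have h1 : t ≤ C.anchor x t := C.le_anchor hs (le_refl t)
      omega
    · have hns : ¬ ∀ s ∈ C.T x, s < t → C.M₀ + s < t := fun hs' =>
        hs (Finset.mem_filter.2 ⟨ht, hs'⟩)
      push_neg at hns
      obtain ⟨s, hsT, hst, hle⟩ := hns
      have hanch : C.anchor x t = C.anchor x s := by
        rw [anchor, anchor]
        congr 1
        ext a
        simp only [Finset.mem_filter]
        constructor
        · rintro ⟨haS, hat⟩
          refine ⟨haS, ?_⟩
          by_contra hgt
          push_neg at hgt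
          have hx2 := (Finset.mem_filter.1 haS).2 s hsT (by omega)
          omega
        · rintro ⟨haS, has⟩; exact ⟨haS, le_trans has (le_of_lt hst)⟩
      have hcard : ((C.T x).filter (· < s)).card + 1 ≤ ((C.T x).filter (· < t)).card := by
        have hsub : insert s ((C.T x).filter (· < s)) ⊆ (C.T x).filter (· < t) := by
          intro b hb
          rcases Finset.mem_insert.1 hb with rfl | hb'
          · exact Finset.mem_filter.2 ⟨hsT, hst⟩
          · have hb2 := Finset.mem_filter.1 hb'
            exact Finset.mem_filter.2 ⟨hb2.1, by
              have : b < s := hb2.2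
              show b < t
              omega⟩
        have hcard2 := Finset.card_le_card hsub
        rwa [Finset.card_insert_of_notMem (by simp)] at hcard2
      have ihs := ih s hst hsT
      have h1 : C.anchor x s ≤ s := (C.anchor_mem_le hsT).2
      rw [hanch]
      have hkey : C.M₀ * ((C.T x).filter (· < s)).card + C.M₀ ≤
          C.M₀ * ((C.T x).filter (· < t)).card := by
        calc C.M₀ * ((C.T x).filter (· < s)).card + C.M₀
            = C.M₀ * (((C.T x).filter (· < s)).card + 1) := by ring
          _ ≤ _ := Nat.mul_le_mul_left _ hcard
      set A := C.M₀ * ((C.T x).filter (· < s)).card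
      set B := C.M₀ * ((C.T x).filter (· < t)).card
      omega

noncomputable def rnk (x : X) (a : ℕ) : ℕ := ((C.St x).filter (fun b => b < a)).card

lemma rnk_lt {x : X} {a : ℕ} (ha : a ∈ C.St x) : C.rnk x a < (C.St x).card := by
  apply Finset.card_lt_card
  rw [Finset.ssubset_iff_of_subset (Finset.filter_subset _ _)]
  exact ⟨a, ha, by simp⟩

lemma rnk_mono {x : X} {a a' : ℕ} (ha : a ∈ C.St x) (h : a < a') :
    C.rnk x a < C.rnk x a' := by
  apply Finset.card_lt_card
  constructor
  · intro b hb
    have hb2 := Finset.mem_filter.1 hb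
    exact Finset.mem_filter.2 ⟨hb2.1, by
      have : b < a := hb2.2; show b < a'; omega⟩
  · intro hsub
    have : a ∈ (C.St x).filter (fun b => b < a) := hsub (Finset.mem_filter.2 ⟨ha, by simp [h]⟩)
    simp at this
lemma rnk_injOn {x : X} {a a' : ℕ} (ha : a ∈ C.St x) (ha' : a' ∈ C.St x)
    (h : C.rnk x a = C.rnk x a') : a = a' := by
  rcases lt_trichotomy a a' with h' | h' | h'
  · exact absurd h (Nat.ne_of_lt (C.rnk_mono ha h'))
  · exact h'
  · exact absurd h.symm (Nat.ne_of_lt (C.rnk_mono ha' h'))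

noncomputable def anchN (x : X) (i : ℕ) : ℕ :=
  ((C.St x).filter (fun a => C.rnk x a = i)).sup id

lemma anchN_eval {x : X} {a : ℕ} (ha : a ∈ C.St x) : C.anchN x (C.rnk x a) = a := by
  have hfe : (C.St x).filter (fun b => C.rnk x b = C.rnk x a) = {a} := by
    ext b
    simp only [Finset.mem_filter, Finset.mem_singleton]
    constructor
    · rintro ⟨hb, hr⟩; exact C.rnk_injOn hb ha hr
    · rintro rfl; exact ⟨ha, rfl⟩
  rw [anchN, hfe, Finset.sup_singleton]; rfl

noncomputable def anchF (x : X) (i : Fin C.L) : Fin (C.n + 1) :=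
  ⟨min (C.anchN x (i : ℕ)) C.n, by
    have := min_le_right (C.anchN x (i : ℕ)) C.n; omega⟩

noncomputable def gdat (x : X) (j : J) : Option (Fin C.L × Fin (C.M₀ * Fintype.card J + 1)) :=
  if h : ∃ t, t ∈ C.T x ∧ C.wjf (C.f^[t] x) = some j then
    if h2 : C.rnk x (C.anchor x h.choose) < C.L ∧
        h.choose - C.anchor x h.choose < C.M₀ * Fintype.card J + 1 then
      some (⟨C.rnk x (C.anchor x h.choose), h2.1⟩, ⟨h.choose - C.anchor x h.choose, h2.2⟩)
    else none
  else none

noncomputable def bdat2 (x : X) (j : J) : Option {p : X // p ∈ C.PF} :=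
  if h : ∃ t, t ∈ C.T x ∧ C.wjf (C.f^[t] x) = some j then
    if h.choose + 1 < C.n then C.bl (C.f^[h.choose + 1] x) else none
  else none

noncomputable def bdat1 (x : X) : Option {p : X // p ∈ C.PF} :=
  if 1 < C.n then C.bl (C.f^[1] x) else none

noncomputable def dat0 (x : X) : Option {p : X // p ∈ C.PF} × Option J := (C.bl x, C.wjf x)

lemma gd_choose {x : X} {t : ℕ} {j : J} (ht : t ∈ C.T x) (hj : C.wjf (C.f^[t] x) = some j)
    (h : ∃ t, t ∈ C.T x ∧ C.wjf (C.f^[t] x) = some j) : h.choose = t := by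
  have hs := h.choose_spec
  exact C.T_letter_unique (C.wjf_spec hs.2) (C.wjf_spec hj)

lemma F1 {x : X} (hx : x ∈ C.Y) {t : ℕ} (ht : t ∈ C.T x) :
    ∃ j i off, C.gdat x j = some (i, off) ∧ ((C.anchF x i : ℕ) + (off : ℕ) = t) ∧
      C.wjf (C.f^[t] x) = some j := by
  obtain ⟨j, hj⟩ := C.wjf_some_of_T hx ht
  have h : ∃ t, t ∈ C.T x ∧ C.wjf (C.f^[t] x) = some j := ⟨t, ht, hj⟩
  have hch : h.choose = t := C.gd_choose ht hj h
  have hanch := C.anchor_mem_le ht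
  have h2a : C.rnk x (C.anchor x t) < C.L :=
    lt_of_lt_of_le (C.rnk_lt hanch.1) (C.card_St_le hx)
  have h2b : t - C.anchor x t < C.M₀ * Fintype.card J + 1 := by
    have hb1 := C.anchor_gap t ht
    have hb2 : ((C.T x).filter (· < t)).card ≤ Fintype.card J :=
      le_trans (Finset.card_le_card (Finset.filter_subset _ _)) (C.card_T_le hx)
    have hb3 : C.M₀ * ((C.T x).filter (· < t)).card ≤ C.M₀ * Fintype.card J :=
      Nat.mul_le_mul_left _ hb2
    omega
  refine ⟨j, ⟨C.rnk x (C.anchor x t), h2a⟩, ⟨t - C.anchor x t, h2b⟩, ?_, ?_, hj⟩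
  · rw [gdat, dif_pos h]
    simp only [hch]
    rw [dif_pos (⟨h2a, h2b⟩ : C.rnk x (C.anchor x t) < C.L ∧
      t - C.anchor x t < C.M₀ * Fintype.card J + 1)]
  · have he := C.anchN_eval hanch.1
    have htn : t < C.n := (C.mem_T.1 ht).1
    simp only [anchF]
    rw [he]
    have := hanch.2
    omega

lemma F2 {x : X} {j : J} {i : Fin C.L} {off : Fin (C.M₀ * Fintype.card J + 1)}
    (hg : C.gdat x j = some (i, off)) :
    ((C.anchF x i : ℕ) + (off : ℕ)) ∈ C.T x ∧
      C.wjf (C.f^[(C.anchF x i : ℕ) + (off : ℕ)] x) = some j := by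
  by_cases h : ∃ t, t ∈ C.T x ∧ C.wjf (C.f^[t] x) = some j
  · rw [gdat, dif_pos h] at hg
    have hs := h.choose_spec
    by_cases h2 : C.rnk x (C.anchor x h.choose) < C.L ∧
        h.choose - C.anchor x h.choose < C.M₀ * Fintype.card J + 1
    · rw [dif_pos h2] at hg
      rw [Option.some_inj] at hg
      have hi : (⟨C.rnk x (C.anchor x h.choose), h2.1⟩ : Fin C.L) = i := congrArg Prod.fst hg
      have hoff : (⟨h.choose - C.anchor x h.choose, h2.2⟩ :
          Fin (C.M₀ * Fintype.card J + 1)) = off := congrArg Prod.snd hg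
      have hiv : C.rnk x (C.anchor x h.choose) = (i : ℕ) := by rw [← hi]
      have hoffv : h.choose - C.anchor x h.choose = (off : ℕ) := by rw [← hoff]
      have hanch := C.anchor_mem_le hs.1
      have he := C.anchN_eval hanch.1
      have htn : h.choose < C.n := (C.mem_T.1 hs.1).1
      have hdec : (C.anchF x i : ℕ) + (off : ℕ) = h.choose := by
        simp only [anchF]
        rw [← hiv, he]
        have := hanch.2
        omega
      rw [hdec]
      exact ⟨hs.1, hs.2⟩
    · rw [dif_neg h2] at hg; exact absurd hg (by simp)
  · rw [gdat, dif_neg h] at hg; exact absurd hg (by simp)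

lemma bdat2_eval {x : X} {t : ℕ} {j : J} (ht : t ∈ C.T x) (hj : C.wjf (C.f^[t] x) = some j)
    (htn : t + 1 < C.n) : C.bdat2 x j = C.bl (C.f^[t + 1] x) := by
  have h : ∃ t, t ∈ C.T x ∧ C.wjf (C.f^[t] x) = some j := ⟨t, ht, hj⟩
  have hch : h.choose = t := C.gd_choose ht hj h
  rw [bdat2, dif_pos h]
  simp only [hch]
  rw [if_pos htn]

lemma dist_lt_of_ball {a b p : X} (ha : a ∈ Metric.ball p C.δ) (hb : b ∈ Metric.ball p C.δ) :
    dist a b < C.ε := by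
  rw [Metric.mem_ball] at ha hb
  have h1 := dist_triangle a p b
  rw [dist_comm b p] at hb
  have := C.h2δ
  linarith

lemma letters_dist {x y : X} (hx : x ∈ C.Y) (hy : y ∈ C.Y)
    (h0 : C.dat0 x = C.dat0 y) (hA : C.anchF x = C.anchF y) (hG : C.gdat x = C.gdat y)
    (hb1 : C.bdat1 x = C.bdat1 y) (hb2 : C.bdat2 x = C.bdat2 y) :
    ∀ t < C.n, dist (C.f^[t] x) (C.f^[t] y) < C.ε := by
  have hT : C.T x = C.T y := by
    ext t
    constructor
    · intro ht
      obtain ⟨j, i, off, hg, hdec, -⟩ := C.F1 hx ht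
      have hg' : C.gdat y j = some (i, off) := by rw [← hG]; exact hg
      have h2 := C.F2 hg'
      rw [← hA, hdec] at h2
      exact h2.1
    · intro ht
      obtain ⟨j, i, off, hg, hdec, -⟩ := C.F1 hy ht
      have hg' : C.gdat x j = some (i, off) := by rw [hG]; exact hg
      have h2 := C.F2 hg'
      rw [hA, hdec] at h2
      exact h2.1
  have hwj : ∀ t ∈ C.T x, C.wjf (C.f^[t] x) = C.wjf (C.f^[t] y) := by
    intro t ht
    obtain ⟨j, i, off, hg, hdec, hjx⟩ := C.F1 hx ht
    have hg' : C.gdat y j = some (i, off) := by rw [← hG]; exact hg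
    have h2 := C.F2 hg'
    rw [← hA, hdec] at h2
    rw [hjx, h2.2]
  have hbl : ∀ t, t < C.n → 1 ≤ t → C.bl (C.f^[t] x) = C.bl (C.f^[t] y) := by
    intro t
    induction t using Nat.strong_induction_on with
    | _ t ih =>
      intro htn ht1
      by_cases hTx : t ∈ C.T x
      · have hTy : t ∈ C.T y := by rw [← hT]; exact hTx
        rw [(C.bl_eq_none).2 (C.mem_T.1 hTx).2.2, (C.bl_eq_none).2 (C.mem_T.1 hTy).2.2]
      · have hTy : t ∉ C.T y := by rw [← hT]; exact hTx
        have hBx : C.InB (C.f^[t] x) := by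
          by_contra hB
          exact hTx (C.mem_T.2 ⟨htn, ht1, hB⟩)
        have hBy : C.InB (C.f^[t] y) := by
          by_contra hB
          exact hTy (C.mem_T.2 ⟨htn, ht1, hB⟩)
        rcases eq_or_lt_of_le ht1 with h1 | h1
        · subst h1
          have he1 : C.bdat1 x = C.bl (C.f^[1] x) := by rw [bdat1, if_pos htn]
          have he2 : C.bdat1 y = C.bl (C.f^[1] y) := by rw [bdat1, if_pos htn]
          rw [← he1, ← he2, hb1]
        · have ht2 : 2 ≤ t := h1
          by_cases hTx' : t - 1 ∈ C.T x
          · obtain ⟨j, hj⟩ := C.wjf_some_of_T hx hTx'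
            have hTy' : t - 1 ∈ C.T y := by rw [← hT]; exact hTx'
            have hjy : C.wjf (C.f^[t - 1] y) = some j := by rw [← hwj _ hTx', hj]
            have he1 : C.bdat2 x j = C.bl (C.f^[t - 1 + 1] x) :=
              C.bdat2_eval hTx' hj (by omega)
            have he2 : C.bdat2 y j = C.bl (C.f^[t - 1 + 1] y) :=
              C.bdat2_eval hTy' hjy (by omega)
            have ht11 : t - 1 + 1 = t := by omega
            rw [ht11] at he1 he2
            rw [← he1, ← he2, hb2]
          · have hBx' : C.InB (C.f^[t - 1] x) := by
              by_contra hB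
              exact hTx' (C.mem_T.2 ⟨by omega, by omega, hB⟩)
            have hihl := ih (t - 1) (by omega) (by omega) (by omega)
            obtain ⟨p, hp⟩ : ∃ p, C.bl (C.f^[t - 1] x) = some p := by
              cases hbl' : C.bl (C.f^[t - 1] x) with
              | none => exact absurd hBx' ((C.bl_eq_none).1 hbl')
              | some p => exact ⟨p, rfl⟩
            have hpx : C.f^[t - 1] x ∈ Metric.ball (p : X) C.δ := C.bl_spec hp
            have hpy : C.f^[t - 1] y ∈ Metric.ball (p : X) C.δ :=
              C.bl_spec (by rw [← hihl]; exact hp)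
            have hit : ∀ z : X, C.f^[t] z = C.f (C.f^[t - 1] z) := by
              intro z
              conv_lhs => rw [show t = (t - 1) + 1 by omega]
              rw [Function.iterate_succ_apply']
            have hdx : C.f^[t] x ∈ Metric.ball (C.f (p : X)) C.δ := by
              rw [hit]
              exact C.hdet _ p.2 _ hpx (by rw [← hit]; exact hBx)
            have hdy : C.f^[t] y ∈ Metric.ball (C.f (p : X)) C.δ := by
              rw [hit]
              exact C.hdet _ p.2 _ hpy (by rw [← hit]; exact hBy)
            rw [C.bl_eq_some_of (C.hfPF _ p.2) hdx, C.bl_eq_some_of (C.hfPF _ p.2) hdy]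
  intro t htn
  rcases Nat.eq_zero_or_pos t with rfl | ht1
  · have h0b : C.bl x = C.bl y := congrArg Prod.fst h0
    have h0w : C.wjf x = C.wjf y := congrArg Prod.snd h0
    simp only [Function.iterate_zero_apply]
    cases hbx : C.bl x with
    | some p =>
      have hby : C.bl y = some p := by rw [← h0b, hbx]
      exact C.dist_lt_of_ball (C.bl_spec hbx) (C.bl_spec hby)
    | none =>
      have hnx : ¬ C.InB x := (C.bl_eq_none).1 hbx
      obtain ⟨j, hj⟩ := C.wjf_some (C.hcov x hx hnx)
      have hjy : C.wjf y = some j := by rw [← h0w, hj]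
      exact C.hWsmall j _ (C.wjf_spec hj) _ (C.wjf_spec hjy)
  · have hble := hbl t htn ht1
    cases hbx : C.bl (C.f^[t] x) with
    | some p =>
      have hby : C.bl (C.f^[t] y) = some p := by rw [← hble, hbx]
      exact C.dist_lt_of_ball (C.bl_spec hbx) (C.bl_spec hby)
    | none =>
      have hTx : t ∈ C.T x := C.mem_T.2 ⟨htn, ht1, (C.bl_eq_none).1 hbx⟩
      obtain ⟨j, hj⟩ := C.wjf_some_of_T hx hTx
      have hjy : C.wjf (C.f^[t] y) = some j := by rw [← hwj _ hTx, hj]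
      exact C.hWsmall j _ (C.wjf_spec hj) _ (C.wjf_spec hjy)

lemma card_bound [DecidableEq J] {E : Finset X} (hE : ↑E ⊆ C.Y)
    (hsep : IsDynSeparated C.f C.n C.ε E) :
    E.card ≤ (Fintype.card ((Option {p : X // p ∈ C.PF} × Option J) ×
        (J → Option (Fin C.L × Fin (C.M₀ * Fintype.card J + 1))) ×
        (Option {p : X // p ∈ C.PF}) × (J → Option {p : X // p ∈ C.PF}))) *
      (C.n + 1) ^ C.L := by
  classical
  set R := (Option {p : X // p ∈ C.PF} × Option J) ×
      (J → Option (Fin C.L × Fin (C.M₀ * Fintype.card J + 1))) ×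
      (Option {p : X // p ∈ C.PF}) × (J → Option {p : X // p ∈ C.PF}) with hR
  set data : X → R × (Fin C.L → Fin (C.n + 1)) :=
    fun x => ((C.dat0 x, C.gdat x, C.bdat1 x, C.bdat2 x), C.anchF x) with hdata
  have hinj : Set.InjOn data ↑E := by
    intro a ha b hb heq
    by_contra hne
    have hsep' := hsep a ha b hb hne
    have hdist : ∀ t < C.n, dist (C.f^[t] a) (C.f^[t] b) < C.ε := by
      apply C.letters_dist (hE ha) (hE hb)
      · exact congrArg (fun q => q.1.1) heq
      · exact congrArg (fun q => q.2) heq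
      · exact congrArg (fun q => q.1.2.1) heq
      · exact congrArg (fun q => q.1.2.2.1) heq
      · exact congrArg (fun q => q.1.2.2.2) heq
    have hsup : ((Finset.range C.n).sup fun k => nndist (C.f^[k] a) (C.f^[k] b)) <
        C.ε.toNNReal := by
      rw [Finset.sup_lt_iff (by simpa using Real.toNNReal_pos.2 C.hε)]
      intro k hk
      rw [nndist_dist, Real.toNNReal_lt_toNNReal_iff C.hε]
      exact hdist k (Finset.mem_range.1 hk)
    have hlt : dynDist C.f C.n a b < C.ε := by
      rw [dynDist]
      calc (((Finset.range C.n).sup fun k => nndist (C.f^[k] a) (C.f^[k] b) : NNReal) : ℝ)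
          < (C.ε.toNNReal : ℝ) := NNReal.coe_lt_coe.2 hsup
        _ = C.ε := Real.coe_toNNReal _ C.hε.le
    linarith
  have hcard := Finset.card_le_card_of_injOn data
    (fun a _ => Finset.mem_univ (data a)) hinj
  rw [Finset.card_univ] at hcard
  calc E.card ≤ Fintype.card (R × (Fin C.L → Fin (C.n + 1))) := hcard
    _ = Fintype.card R * (C.n + 1) ^ C.L := by
        rw [Fintype.card_prod, Fintype.card_fun, Fintype.card_fin, Fintype.card_fin]

end Ctx


variable {X : Type*} [MetricSpace X]

lemma image_nonWandering {f : X → X} (hf : Continuous f) {p : X} (hp : p ∈ nonWandering f) :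
    f p ∈ nonWandering f := by
  intro U hU
  obtain ⟨n, hn, z, hz1, hz2⟩ := hp (f ⁻¹' U) (hf.continuousAt.preimage_mem_nhds hU)
  obtain ⟨w, hw, hwz⟩ := hz1
  refine ⟨n, hn, f z, ⟨f w, hw, ?_⟩, hz2⟩
  rw [← hwz, ← Function.iterate_succ_apply, Function.iterate_succ_apply']

lemma exists_wandering_nhd {f : X → X} {q : X} (hq : q ∉ nonWandering f) :
    ∃ U ∈ nhds q, ∀ d : ℕ, 1 ≤ d → (f^[d] '' U ∩ U) = ∅ := by
  simp only [nonWandering, Set.mem_setOf_eq] at hq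
  push_neg at hq
  obtain ⟨U, hU, h⟩ := hq
  exact ⟨U, hU, fun d hd => h d hd⟩


def InstAt (f : X → X) (Y : Set X) {k : ℕ} (A : Fin k → Set X) (M : ℕ) : Prop :=
  ∃ x ∈ Y, ∃ t : Fin k → ℕ, (∀ i, 1 ≤ t i ∧ f^[t i] x ∈ A i) ∧
    ∀ i j, i ≠ j → (M : ℤ) < |(t i : ℤ) - (t j : ℤ)|

lemma machine [CompactSpace X] {f : X → X} {Y : Set X} (hY : Set.MapsTo f Y Y) {k : ℕ}
    {A : Fin k → Set X} (hA : ∀ i, ∀ q ∈ closure (A i), q ∉ nonWandering f)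
    (hsf : ∀ M, InstAt f Y A M) :
    ∃ S : Set X, S ⊆ closure Y ∧ IsSingularSet f S ∧ S.ncard = k := by
  classical
  choose xw hxwY tw htw hgap using hsf
  set z : ℕ → (Fin k → X) := fun M i => f^[tw M i] (xw M) with hz
  have hzA : ∀ M i, z M i ∈ A i := fun M i => (htw M i).2
  have hzY : ∀ M i, z M i ∈ Y := fun M i => (hY.iterate _) (hxwY M)
  obtain ⟨y, -, φ, hφ, hlim⟩ := isCompact_univ.tendsto_subseq (fun M => Set.mem_univ (z M))
  have hlim' : ∀ i, Tendsto (fun M => z (φ M) i) atTop (nhds (y i)) := by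
    rw [tendsto_pi_nhds] at hlim; exact hlim
  have hyA : ∀ i, y i ∈ closure (A i) := fun i =>
    mem_closure_of_tendsto (hlim' i) (Eventually.of_forall fun M => hzA _ i)
  have hyY : ∀ i, y i ∈ closure Y := fun i =>
    mem_closure_of_tendsto (hlim' i) (Eventually.of_forall fun M => hzY _ i)
  have hyNW : ∀ i, y i ∉ nonWandering f := fun i => hA i _ (hyA i)
  have key : ∀ V : Fin k → Set X, (∀ i, V i ∈ nhds (y i)) → MutuallySingularSets f V := by
    intro V hV M
    have hev : ∀ᶠ M' in atTop, ∀ i, z (φ M') i ∈ V i :=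
      eventually_all.2 fun i => (hlim' i).eventually_mem (hV i)
    obtain ⟨M', hM'1, hM'2⟩ := (hev.and (eventually_ge_atTop M)).exists
    refine ⟨xw (φ M'), tw (φ M'), fun j => ⟨(htw _ j).1, hM'1 j⟩, fun i j hij => ?_⟩
    have h1 := hgap (φ M') i j hij
    have h2 : (M : ℤ) ≤ (φ M' : ℤ) := by exact_mod_cast le_trans hM'2 hφ.le_apply
    omega
  have hyinj : Function.Injective y := by
    intro i j hij
    by_contra hne
    obtain ⟨U, hUn, hUw⟩ := exists_wandering_nhd (hyNW i)
    have hV : ∀ l, (fun l => if l = i ∨ l = j then U else Set.univ) l ∈ nhds (y l) := by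
      intro l
      by_cases hl : l = i ∨ l = j
      · simp only [hl, if_true]
        rcases hl with rfl | rfl
        · exact hUn
        · rw [hij] at hUn; exact hUn
      · simp only [hl, if_false]; exact Filter.univ_mem
    obtain ⟨x, t, ht, hg⟩ := key _ hV 0
    have hti : f^[t i] x ∈ U := by have := (ht i).2; simpa [hne] using this
    have htj : f^[t j] x ∈ U := by have := (ht j).2; simpa using this
    have hgij := hg i j hne
    rcases lt_trichotomy (t i) (t j) with h | h | h
    · exact no_return hUw h hti htj
    · rw [h] at hgij; simp at hgij
    · exact no_return hUw h htj hti
  refine ⟨Set.range y, ?_, ⟨Set.finite_range y, ?_, ?_⟩, ?_⟩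
  · rintro - ⟨i, rfl⟩; exact hyY i
  · rintro - ⟨i, rfl⟩; exact hyNW i
  · intro L' xx hxxinj hxxr U' hU'
    have hxxy : ∀ j, ∃ i, y i = xx j := by
      intro j
      have : xx j ∈ Set.range y := hxxr ▸ Set.mem_range_self j
      exact this
    choose e he using hxxy
    have heinj : Function.Injective e := by
      intro a b hab
      apply hxxinj
      rw [← he a, ← he b, hab]
    set V : Fin k → Set X := fun i => if h : ∃ j, e j = i then U' h.choose else Set.univ with hVdef
    have hVn : ∀ i, V i ∈ nhds (y i) := by
      intro i
      by_cases h : ∃ j, e j = i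
      · simp only [hVdef, dif_pos h]
        have h1 := hU' h.choose
        rwa [← he h.choose, h.choose_spec] at h1
      · simp only [hVdef, dif_neg h]; exact Filter.univ_mem
    intro M
    obtain ⟨x, t, ht, hg⟩ := key V hVn M
    refine ⟨x, fun j => t (e j), fun j => ⟨(ht (e j)).1, ?_⟩, fun i j hij => hg _ _ (fun h => hij (heinj h))⟩
    have h2 := (ht (e j)).2
    have h : ∃ j', e j' = e j := ⟨j, rfl⟩
    rw [hVdef] at h2
    simp only [dif_pos h] at h2
    have : h.choose = j := heinj h.choose_spec
    rwa [this] at h2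
  · rw [← Set.image_univ, Set.ncard_image_of_injective _ hyinj, Set.ncard_univ, Nat.card_eq_fintype_card, Fintype.card_fin]


end Stmt10Aux


namespace Stmt10Aux

lemma limsup_le_L {u : ℕ → ℕ} {c₀ L : ℕ} (hc₀ : 1 ≤ c₀)
    (hu : ∀ n, u n ≤ c₀ * (n + 1) ^ L) :
    (Filter.atTop.limsup fun n : ℕ => ENNReal.ofReal (Real.log (u n) / Real.log n)) ≤
      (L : ℝ≥0∞) := by
  refine ENNReal.le_of_forall_pos_le_add fun γ hγ _ => ?_
  have hγR : (0 : ℝ) < (γ : ℝ) := hγ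
  set B : ℝ := Real.log c₀ + L * Real.log 2 with hB
  have hlc : (0:ℝ) ≤ Real.log c₀ := Real.log_nonneg (by exact_mod_cast hc₀)
  have hl2 : (0:ℝ) ≤ Real.log 2 := Real.log_nonneg (by norm_num)
  have hB0 : 0 ≤ B := by positivity
  refine Filter.limsup_le_of_le (by isBoundedDefault) ?_
  filter_upwards [eventually_ge_atTop 2, eventually_ge_atTop ⌈Real.exp (B / γ)⌉₊]
    with n h2 hceil
  have hn0 : (0 : ℝ) < n := by positivity
  have hn1 : (1 : ℝ) < n := by exact_mod_cast h2
  have hlogn : 0 < Real.log n := Real.log_pos hn1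
  have hexp : Real.exp (B / γ) ≤ n := le_trans (Nat.le_ceil _) (by exact_mod_cast hceil)
  have hBle : B / γ ≤ Real.log n := (Real.le_log_iff_exp_le hn0).2 hexp
  have hBg : B ≤ γ * Real.log n := by
    rw [div_le_iff₀ hγR] at hBle
    linarith
  by_cases hu0 : u n = 0
  · simp [hu0]
  · have hu1 : 1 ≤ u n := Nat.one_le_iff_ne_zero.2 hu0
    have hu1' : (1 : ℝ) ≤ (u n : ℝ) := by exact_mod_cast hu1
    have hcast : (u n : ℝ) ≤ (c₀ : ℝ) * ((n : ℝ) + 1) ^ L := by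
      have := hu n
      push_cast
      exact_mod_cast this
    have hle1 : Real.log (u n) ≤ Real.log ((c₀ : ℝ) * ((n : ℝ) + 1) ^ L) := by
      apply Real.log_le_log (by linarith) hcast
    have hle2 : Real.log ((c₀ : ℝ) * ((n : ℝ) + 1) ^ L) =
        Real.log c₀ + L * Real.log ((n : ℝ) + 1) := by
      rw [Real.log_mul (by positivity) (by positivity), Real.log_pow]
    have hle3 : Real.log ((n : ℝ) + 1) ≤ Real.log 2 + Real.log n := by
      rw [← Real.log_mul (by norm_num) (ne_of_gt hn0)]
      apply Real.log_le_log (by positivity)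
      linarith
    have hcomb : Real.log (u n) ≤ B + L * Real.log n := by
      have hL0 : (0:ℝ) ≤ (L:ℝ) := Nat.cast_nonneg L
      have h4 : (L:ℝ) * Real.log ((n : ℝ) + 1) ≤ (L:ℝ) * (Real.log 2 + Real.log n) :=
        mul_le_mul_of_nonneg_left hle3 hL0
      rw [hle2] at hle1
      rw [hB]
      nlinarith
    have hdiv : Real.log (u n) / Real.log n ≤ (L : ℝ) + γ := by
      rw [div_le_iff₀ hlogn]
      have hexpand : ((L : ℝ) + γ) * Real.log n = (L:ℝ) * Real.log n + γ * Real.log n := by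
        ring
      rw [hexpand]
      linarith
    calc ENNReal.ofReal (Real.log (u n) / Real.log n) ≤ ENNReal.ofReal ((L : ℝ) + γ) :=
          ENNReal.ofReal_le_ofReal hdiv
      _ = (L : ℝ≥0∞) + γ := by
          rw [ENNReal.ofReal_add (Nat.cast_nonneg L) hγR.le, ENNReal.ofReal_natCast,
            ENNReal.ofReal_coe_nnreal]

lemma per_eps {X : Type*} [MetricSpace X] [CompactSpace X] {f : X → X} (hf : Continuous f)
    (hNW : (nonWandering f).Finite) {Y : Set X} (hY : Set.MapsTo f Y Y) (L : ℕ)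
    (hno : ∀ S : Set X, S ⊆ closure Y → IsSingularSet f S → S.ncard ≠ L + 1)
    {ε : ℝ} (hε : 0 < ε) :
    ∃ c₀ : ℕ, 1 ≤ c₀ ∧ ∀ n, maxSep f Y n ε ≤ c₀ * (n + 1) ^ L := by
  classical
  set PF : Finset X := hNW.toFinset with hPFdef
  have hPF : ∀ p : X, p ∈ PF ↔ p ∈ nonWandering f := fun p => hNW.mem_toFinset
  -- minimal separation between distinct non-wandering points
  set pairs := PF.offDiag with hpairs
  set sep : ℝ := if h : pairs.Nonempty then pairs.inf' h (fun q => dist q.1 q.2) else 1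
    with hsepdef
  have hsep0 : 0 < sep := by
    rw [hsepdef]
    split_ifs with h
    · rw [Finset.lt_inf'_iff]
      rintro ⟨a, b⟩ hab
      obtain ⟨-, -, hne⟩ := Finset.mem_offDiag.1 hab
      exact dist_pos.2 hne
    · norm_num
  have hsep_le : ∀ p ∈ PF, ∀ p' ∈ PF, p ≠ p' → sep ≤ dist p p' := by
    intro p hp p' hp' hne
    have hmem : (p, p') ∈ pairs := Finset.mem_offDiag.2 ⟨hp, hp', hne⟩
    have hne' : pairs.Nonempty := ⟨_, hmem⟩
    rw [hsepdef, dif_pos hne']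
    exact Finset.inf'_le _ hmem
  set η : ℝ := min (ε / 4) (sep / 3) with hηdef
  have hη0 : 0 < η := lt_min (by linarith) (by linarith)
  obtain ⟨δ₁, hδ₁0, hδ₁⟩ := Metric.uniformContinuous_iff.1
    (CompactSpace.uniformContinuous_of_continuous hf) η hη0
  set δ : ℝ := min δ₁ η with hδdef
  have hδ0 : 0 < δ := lt_min hδ₁0 hη0
  have hδη : δ ≤ η := min_le_right _ _
  have hδδ₁ : δ ≤ δ₁ := min_le_left _ _
  have hηε : η ≤ ε / 4 := min_le_left _ _
  have hηS : η ≤ sep / 3 := min_le_right _ _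
  have h2δ : 2 * δ ≤ ε := by linarith
  have hdisj : ∀ p ∈ PF, ∀ p' ∈ PF, ∀ z, z ∈ Metric.ball p δ → z ∈ Metric.ball p' δ →
      p = p' := by
    intro p hp p' hp' z hz hz'
    by_contra hne
    have h1 := hsep_le p hp p' hp' hne
    rw [Metric.mem_ball] at hz hz'
    have h2 := dist_triangle p z p'
    rw [dist_comm z p] at hz
    rw [dist_comm z p'] at hz'
    have : dist z p' < δ := by rwa [dist_comm]
    linarith
  have hfPF : ∀ p ∈ PF, f p ∈ PF := by
    intro p hp
    rw [hPF]
    exact image_nonWandering hf ((hPF p).1 hp)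
  have hdet : ∀ p ∈ PF, ∀ z ∈ Metric.ball p δ,
      (∃ p', p' ∈ PF ∧ f z ∈ Metric.ball p' δ) → f z ∈ Metric.ball (f p) δ := by
    rintro p hp z hz ⟨p', hp', hzp'⟩
    have hfp : f p ∈ PF := hfPF p hp
    have h1 : dist (f z) (f p) < η := hδ₁ (lt_of_lt_of_le (Metric.mem_ball.1 hz) hδδ₁)
    have h2 : dist (f z) p' < δ := Metric.mem_ball.1 hzp'
    have hpp : p' = f p := by
      by_contra hne
      have h3 := hsep_le p' hp' (f p) hfp hne
      have h4 := dist_triangle p' (f z) (f p)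
      rw [dist_comm (f z) p'] at h2
      linarith
    rw [← hpp]
    exact hzp'
  -- the compact set of wandering points of `closure Y` away from the balls
  set Kc : Set X := closure Y \ (⋃ p ∈ PF, Metric.ball p δ) with hKcdef
  have hKcl : IsClosed Kc :=
    isClosed_closure.sdiff (isOpen_biUnion fun _ _ => Metric.isOpen_ball)
  have hKW : ∀ q : X, q ∈ Kc →
      ∃ ρ : ℝ, 0 < ρ ∧ (∀ d, 1 ≤ d → (f^[d] '' Metric.ball q ρ ∩ Metric.ball q ρ) = ∅) ∧
        (∀ a ∈ Metric.ball q ρ, ∀ b ∈ Metric.ball q ρ, dist a b < ε) ∧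
        (∀ z ∈ closure (Metric.ball q ρ), z ∉ nonWandering f) := by
    rintro q ⟨hqY, hqB⟩
    have hqNW : q ∉ nonWandering f := by
      intro hq
      apply hqB
      exact Set.mem_biUnion ((hPF q).2 hq) (Metric.mem_ball_self hδ0)
    obtain ⟨U, hUn, hUw⟩ := exists_wandering_nhd hqNW
    obtain ⟨r, hr0, hrU⟩ := Metric.mem_nhds_iff.1 hUn
    have hNWc : IsOpen (nonWandering f)ᶜ := (hNW.isClosed).isOpen_compl
    obtain ⟨rN, hrN0, hrNc⟩ := Metric.mem_nhds_iff.1 (hNWc.mem_nhds hqNW)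
    refine ⟨min (min (r / 2) (rN / 2)) (ε / 3), by positivity, ?_, ?_, ?_⟩
    · intro d hd
      have hsub : Metric.ball q (min (min (r / 2) (rN / 2)) (ε / 3)) ⊆ U := by
        refine subset_trans (Metric.ball_subset_ball ?_) hrU
        calc min (min (r / 2) (rN / 2)) (ε / 3) ≤ min (r / 2) (rN / 2) := min_le_left _ _
          _ ≤ r / 2 := min_le_left _ _
          _ ≤ r := by linarith
      rw [← Set.subset_empty_iff, ← hUw d hd]
      exact Set.inter_subset_inter (Set.image_mono hsub) hsub
    · intro a ha b hb
      rw [Metric.mem_ball] at ha hb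
      have h1 := dist_triangle a q b
      rw [dist_comm b q] at hb
      have h3 : min (min (r / 2) (rN / 2)) (ε / 3) ≤ ε / 3 := min_le_right _ _
      linarith
    · intro z hz hzNW
      have h1 : z ∈ Metric.closedBall q (min (min (r / 2) (rN / 2)) (ε / 3)) :=
        Metric.closure_ball_subset_closedBall hz
      have h2 : z ∈ Metric.ball q rN := by
        rw [Metric.mem_closedBall] at h1
        rw [Metric.mem_ball]
        have h3 : min (min (r / 2) (rN / 2)) (ε / 3) ≤ rN / 2 :=
          le_trans (min_le_left _ _) (min_le_right _ _)
        linarith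
      exact (hrNc h2) hzNW
  choose! ρ hρ0 hρw hρs hρc using hKW
  have hKcpt : IsCompact Kc := hKcl.isCompact
  have hcover : Kc ⊆ ⋃ q : ↥Kc, Metric.ball (q : X) (ρ (q : X)) := by
    intro z hz
    exact Set.mem_iUnion.2 ⟨⟨z, hz⟩, Metric.mem_ball_self (hρ0 z hz)⟩
  obtain ⟨s, hs⟩ := hKcpt.elim_finite_subcover
    (fun q : ↥Kc => Metric.ball (q : X) (ρ (q : X)))
    (fun _ => Metric.isOpen_ball) hcover
  set J := {q : ↥Kc // q ∈ s} with hJdef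
  have : Fintype J := FinsetCoe.fintype s
  have : DecidableEq J := Classical.decEq J
  set W : J → Set X := fun j => Metric.ball ((j : ↥Kc) : X) (ρ ((j : ↥Kc) : X)) with hWdef
  have hcov : ∀ z ∈ Y, ¬ (∃ p, p ∈ PF ∧ z ∈ Metric.ball p δ) → ∃ j : J, z ∈ W j := by
    intro z hzY hzB
    have hzK : z ∈ Kc := by
      refine ⟨subset_closure hzY, ?_⟩
      intro hmem
      obtain ⟨p, hp, hzp⟩ := Set.mem_iUnion₂.1 hmem
      exact hzB ⟨p, hp, hzp⟩
    have := hs hzK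
    obtain ⟨q, hq⟩ := Set.mem_iUnion.1 this
    obtain ⟨hqs, hzq⟩ := Set.mem_iUnion.1 hq
    exact ⟨⟨q, hqs⟩, hzq⟩
  -- no singular family of sets of size L+1
  have hnosing : ∀ c : Fin (L + 1) → J, ∃ M, ¬ InstAt f Y (fun i => W (c i)) M := by
    intro c
    by_contra hc
    push_neg at hc
    have hA : ∀ i, ∀ q ∈ closure (W (c i)), q ∉ nonWandering f := by
      intro i q hq
      exact hρc _ (c i).1.2 q hq
    obtain ⟨S, hS1, hS2, hS3⟩ := machine hY hA hc
    exact hno S hS1 hS2 hS3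
  choose Mc hMc using hnosing
  set M₀ := Finset.univ.sup Mc with hM₀def
  have hM0 : ∀ x ∈ Y, ∀ t : Fin (L + 1) → ℕ,
      (∀ i, 1 ≤ t i ∧ ¬ (∃ p, p ∈ PF ∧ f^[t i] x ∈ Metric.ball p δ)) →
      ∃ i j, i ≠ j ∧ |(t i : ℤ) - (t j : ℤ)| ≤ (M₀ : ℤ) := by
    intro x hx t ht
    by_contra hcon
    push_neg at hcon
    have hWt : ∀ i, ∃ j : J, f^[t i] x ∈ W j := by
      intro i
      exact hcov _ ((hY.iterate (t i)) hx) (ht i).2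
    choose c hc using hWt
    apply hMc c
    refine ⟨x, hx, t, fun i => ⟨(ht i).1, hc i⟩, fun i j hij => ?_⟩
    have h1 : Mc c ≤ M₀ := Finset.le_sup (Finset.mem_univ c)
    have h2 := hcon i j hij
    have h3 : (Mc c : ℤ) ≤ (M₀ : ℤ) := by exact_mod_cast h1
    omega
  -- assemble the counting context for each n
  refine ⟨Fintype.card ((Option {p : X // p ∈ PF} × Option J) ×
      (J → Option (Fin L × Fin (M₀ * Fintype.card J + 1))) ×
      (Option {p : X // p ∈ PF}) × (J → Option {p : X // p ∈ PF})), ?_, ?_⟩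
  · rw [Nat.one_le_iff_ne_zero]
    have : Nonempty ((Option {p : X // p ∈ PF} × Option J) ×
        (J → Option (Fin L × Fin (M₀ * Fintype.card J + 1))) ×
        (Option {p : X // p ∈ PF}) × (J → Option {p : X // p ∈ PF})) :=
      ⟨⟨(none, none), fun _ => none, none, fun _ => none⟩⟩
    exact Fintype.card_ne_zero
  · intro n
    set C : Ctx X J :=
      { f := f, Y := Y, W := W, PF := PF, δ := δ, ε := ε, M₀ := M₀, L := L, n := n,
        hY := hY, hε := hε, hcov := hcov,
        hWsmall := fun j a ha b hb => hρs _ (j : ↥Kc).2 a ha b hb,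
        hWonce := fun j d hd => hρw _ (j : ↥Kc).2 d hd,
        h2δ := h2δ, hdisj := hdisj, hdet := hdet, hfPF := hfPF, hM₀ := hM0 } with hCdef
    apply csSup_le
    · exact ⟨0, ∅, by simp, Finset.card_empty, fun x hx => absurd hx (by simp)⟩
    · rintro m ⟨E, hE1, rfl, hE3⟩
      exact C.card_bound hE1 hE3

end Stmt10Aux

-- STATEMENT 10
theorem stmt10 {X : Type*} [MetricSpace X] [CompactSpace X] (f : X → X) (hf : Continuous f)
    (hNW : (nonWandering f).Finite) (Y : Set X) (hY : Set.MapsTo f Y Y)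
    (hone : ∃! p, p ∈ Y ∧ p ∈ nonWandering f) :
    polEnt f Y ≤ ⨆ (S : Set X) (_ : S ⊆ closure Y ∧ IsSingularSet f S), (S.ncard : ℝ≥0∞) := by
  classical
  obtain ⟨p, ⟨hpY, hpNW⟩, -⟩ := hone
  have hXne : Nonempty X := ⟨p⟩
  set 𝒮 : Set ℕ := {k : ℕ | ∃ S : Set X, S ⊆ closure Y ∧ IsSingularSet f S ∧ S.ncard = k}
    with h𝒮
  have h0 : 0 ∈ 𝒮 := by
    refine ⟨∅, Set.empty_subset _, ⟨Set.finite_empty,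
      fun x hx => absurd hx (Set.notMem_empty x), ?_⟩, Set.ncard_empty _⟩
    intro L x hinj hrange U hU M
    refine ⟨p, fun _ => 1, fun j => ?_, fun i j hij => ?_⟩
    · exact absurd (hrange ▸ Set.mem_range_self j) (Set.notMem_empty _)
    · exact absurd (hrange ▸ Set.mem_range_self j) (Set.notMem_empty _)
  by_cases hbdd : BddAbove 𝒮
  · set L := sSup 𝒮 with hL
    have hLmem : L ∈ 𝒮 := Nat.sSup_mem ⟨0, h0⟩ hbdd
    obtain ⟨SL, hSL1, hSL2, hSL3⟩ := hLmem
    have hRHS : (L : ℝ≥0∞) ≤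
        ⨆ (S : Set X) (_ : S ⊆ closure Y ∧ IsSingularSet f S), (S.ncard : ℝ≥0∞) := by
      refine le_trans ?_ (le_iSup_of_le SL (le_iSup_of_le ⟨hSL1, hSL2⟩ (le_refl _)))
      rw [hSL3]
    refine le_trans ?_ hRHS
    rw [polEnt]
    refine iSup_le fun ε => iSup_le fun hε => ?_
    have hno : ∀ S : Set X, S ⊆ closure Y → IsSingularSet f S → S.ncard ≠ L + 1 := by
      intro S h1 h2 h3
      have hmem : L + 1 ∈ 𝒮 := ⟨S, h1, h2, h3⟩
      have := le_csSup hbdd hmem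
      omega
    obtain ⟨c₀, hc₀, hbound⟩ := Stmt10Aux.per_eps hf hNW hY L hno hε
    exact Stmt10Aux.limsup_le_L hc₀ hbound
  · have htop : (⨆ (S : Set X) (_ : S ⊆ closure Y ∧ IsSingularSet f S),
        (S.ncard : ℝ≥0∞)) = ⊤ := by
      rw [← top_le_iff]
      have hub : ∀ k : ℕ, (k : ℝ≥0∞) ≤
          ⨆ (S : Set X) (_ : S ⊆ closure Y ∧ IsSingularSet f S), (S.ncard : ℝ≥0∞) := by
        intro k
        obtain ⟨m, hm, hkm⟩ := not_bddAbove_iff.1 hbdd k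
        obtain ⟨S, h1, h2, h3⟩ := hm
        refine le_trans ?_ (le_iSup_of_le S (le_iSup_of_le ⟨h1, h2⟩ (le_refl _)))
        rw [h3]
        exact_mod_cast hkm.le
      calc (⊤ : ℝ≥0∞) = ⨆ k : ℕ, (k : ℝ≥0∞) := ENNReal.iSup_natCast.symm
        _ ≤ _ := iSup_le hub
    rw [htop]
    exact le_top
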